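/- Let V be finite-dimensional with basis (e_λ), and let w be an m-linear form on V with components w_{λ₁...λ_m} = w(e_{λ₁},...,e_{λ_m}). Then w satisfies condition (i) (nondegeneracy in the last slot) if and only if there exists an element w̃ ∈ V^{⊗m}, with components w̃^{λ₁...λ_m}, such that Σ w̃^{μ λ₁...λ_{m-1}} w_{λ₁...λ_{m-1} ν} = δ^μ_ν for all μ, ν ∈ {1,...,n}. -/
import Mathlib

/-- A multilinear form `w` on `Kⁿ` is nondegenerate in its last slot
iff there exists `w̃ ∈ V^{⊗M}` (given by its components) with
`Σ_{λ₁…λ_{M-1}} w̃^{μλ₁…λ_{M-1}} w_{λ₁…λ_{M-1}ν} = δ^μ_ν`. -/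
theorem stmt_5 {K : Type*} [Field K] {n m : ℕ} (hn : 2 ≤ n) (hm : 1 ≤ m)
    (w : MultilinearMap K (fun _ : Fin (m + 1) => (Fin n → K)) K) :
    (∀ X : Fin n → K,
        (∀ Y : Fin m → (Fin n → K), w (Fin.snoc Y X) = 0) → X = 0)
    ↔ ∃ wt : (Fin (m + 1) → Fin n) → K, ∀ μ ν : Fin n,
        ∑ l : Fin m → Fin n,
          wt (Fin.cons μ l) *
            w (Fin.snoc (fun i => Pi.single (l i) (1 : K)) (Pi.single ν (1 : K)))
          = if μ = ν then 1 else 0 := by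
  classical
  have he : ∀ lam : Fin n, (Pi.single lam (1:K) : Fin n → K) = Pi.single lam 1 := fun _ => rfl
  set e : Fin n → (Fin n → K) := fun lam => Pi.single lam 1 with hedef
  -- expansion in the first m slots
  have lemA : ∀ (Y : Fin m → (Fin n → K)) (X : Fin n → K),
      w (Fin.snoc Y X) = ∑ l : Fin m → Fin n,
        (∏ i, Y i (l i)) * w (Fin.snoc (fun i => e (l i)) X) := by
    intro Y X
    set g : MultilinearMap K (fun _ : Fin m => (Fin n → K)) K :=
      (LinearMap.applyₗ X).compMultilinearMap w.curryRight with hg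
    have hgap : ∀ Z, g Z = w (Fin.snoc Z X) := fun Z => rfl
    have hY : (fun i => ∑ lam, Y i lam • e lam) = Y := by
      funext i j
      simp [hedef, Pi.single_apply, Finset.sum_apply, mul_ite, eq_comm]
    calc w (Fin.snoc Y X) = g (fun i => ∑ lam, Y i lam • e lam) := by rw [hgap, hY]
      _ = ∑ l : Fin m → Fin n, g (fun i => Y i (l i) • e (l i)) := g.map_sum _
      _ = ∑ l : Fin m → Fin n, (∏ i, Y i (l i)) * w (Fin.snoc (fun i => e (l i)) X) := by
          refine Finset.sum_congr rfl fun l _ => ?_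
          rw [g.map_smul_univ, hgap]; simp [smul_eq_mul]
  -- linearity in the last slot
  have lemB : ∀ (Y : Fin m → (Fin n → K)) (X : Fin n → K),
      w (Fin.snoc Y X) = ∑ ν, X ν * w (Fin.snoc Y (e ν)) := by
    intro Y X
    have hX : (∑ ν, X ν • e ν) = X := by
      funext j; simp [hedef, Pi.single_apply, Finset.sum_apply, mul_ite, eq_comm]
    calc w (Fin.snoc Y X) = w.curryRight Y X := rfl
      _ = w.curryRight Y (∑ ν, X ν • e ν) := by rw [hX]
      _ = ∑ ν, X ν * w (Fin.snoc Y (e ν)) := by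
          rw [map_sum]; simp [smul_eq_mul]
  set T : (Fin n → K) →ₗ[K] ((Fin m → Fin n) → K) :=
    LinearMap.pi (fun l => w.curryRight (fun i => e (l i))) with hT
  have hTap : ∀ X l, T X l = w (Fin.snoc (fun i => e (l i)) X) := fun X l => rfl
  constructor
  · intro h
    have hker : LinearMap.ker T = ⊥ := by
      rw [LinearMap.ker_eq_bot']
      intro X hX
      refine h X fun Y => ?_
      rw [lemA]
      refine Finset.sum_eq_zero fun l _ => ?_
      have h0 : w (Fin.snoc (fun i => e (l i)) X) = 0 := by
        rw [← hTap, hX]; rfl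
      rw [h0, mul_zero]
    obtain ⟨S, hS⟩ := T.exists_leftInverse_of_injective hker
    refine ⟨fun f => S (Pi.single (fun i => f i.succ) (1:K)) (f 0), fun μ ν => ?_⟩
    have hsum : (∑ l : Fin m → Fin n, T (e ν) l • (Pi.single l (1:K) : (Fin m → Fin n) → K))
        = T (e ν) := by
      funext j
      simp [Pi.single_apply, Finset.sum_apply, mul_ite, eq_comm]
    have hSe : S (T (e ν)) = e ν := by
      simpa using LinearMap.congr_fun hS (e ν)
    calc ∑ l : Fin m → Fin n,
          S (Pi.single (fun i => (Fin.cons μ l : Fin (m+1) → Fin n) i.succ) (1:K))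
            ((Fin.cons μ l : Fin (m+1) → Fin n) 0) *
            w (Fin.snoc (fun i => Pi.single (l i) (1 : K)) (Pi.single ν (1 : K)))
        = ∑ l : Fin m → Fin n, S (T (e ν) l • (Pi.single l (1:K) : (Fin m → Fin n) → K)) μ := by
          refine Finset.sum_congr rfl fun l _ => ?_
          simp only [Fin.cons_succ, Fin.cons_zero]
          rw [map_smul, hTap]
          simp [hedef, smul_eq_mul, mul_comm]
      _ = S (∑ l : Fin m → Fin n, T (e ν) l • (Pi.single l (1:K) : (Fin m → Fin n) → K)) μ := by
          rw [map_sum]; simp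
      _ = (if μ = ν then 1 else 0) := by
          rw [hsum, hSe, hedef]; simp [Pi.single_apply]
  · rintro ⟨wt, hwt⟩ X hX
    funext μ
    have h1 : ∑ ν, X ν * (if μ = ν then (1:K) else 0) = X μ := by
      simp [mul_ite, eq_comm]
    calc X μ = ∑ ν, X ν * (if μ = ν then (1:K) else 0) := h1.symm
      _ = ∑ ν, X ν * ∑ l : Fin m → Fin n, wt (Fin.cons μ l) *
            w (Fin.snoc (fun i => Pi.single (l i) (1:K)) (Pi.single ν (1:K))) := by
          refine Finset.sum_congr rfl fun ν _ => ?_; rw [hwt μ ν]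
      _ = ∑ l : Fin m → Fin n, wt (Fin.cons μ l) *
            ∑ ν, X ν * w (Fin.snoc (fun i => e (l i)) (e ν)) := by
          simp_rw [Finset.mul_sum]
          rw [Finset.sum_comm]
          exact Finset.sum_congr rfl fun l _ => Finset.sum_congr rfl fun ν _ =>
            mul_left_comm _ _ _
      _ = ∑ l : Fin m → Fin n, wt (Fin.cons μ l) * w (Fin.snoc (fun i => e (l i)) X) := by
          refine Finset.sum_congr rfl fun l _ => ?_
          rw [← lemB]
      _ = 0 := by
          refine Finset.sum_eq_zero fun l _ => ?_
          rw [hX, mul_zero]
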